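/- A self-adjoint operator admits no proper generalized symmetric extension. Let A be a densely defined self-adjoint operator on a complex Hilbert space H (A equals its adjoint). Let K be a complex Hilbert space, J : H → K a linear isometry, and B a densely defined symmetric operator on K such that Jx belongs to the domain of B and B(Jx) = J(Ax) for every x in the domain of A. Assume that every closed subspace K₀ of K that is orthogonal to the range of J and reduces B is the zero subspace. Then J is surjective and the domain of B equals the image under J of the domain of A (so B is the copy of A under the identification J). -/

import Mathlib

/-- The orthogonal projection of `K` onto a closed subspace `K₀`, as an operator `K →L[ℂ] K`. -/
noncomputable def projOf {K : Type*} [NormedAddCommGroup K] [InnerProductSpace ℂ K]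
    [CompleteSpace K] (K₀ : Submodule ℂ K) (hc : IsClosed (K₀ : Set K)) : K →L[ℂ] K :=
  haveI : CompleteSpace K₀ := hc.completeSpace_coe
  K₀.subtypeL.comp K₀.orthogonalProjection

/-- A closed subspace `K₀` (with projector `P₀`) reduces the operator `B` if `P₀` maps the
domain of `B` into itself and `B P₀ x = P₀ B x` for all `x` in the domain of `B`. -/
def ReducesPMap {K : Type*} [NormedAddCommGroup K] [InnerProductSpace ℂ K] [CompleteSpace K]
    (B : K →ₗ.[ℂ] K) (K₀ : Submodule ℂ K) (hc : IsClosed (K₀ : Set K)) : Prop :=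
  (∀ x : B.domain, projOf K₀ hc (x : K) ∈ B.domain) ∧
  ∀ (x : B.domain) (h : projOf K₀ hc (x : K) ∈ B.domain),
    B ⟨projOf K₀ hc (x : K), h⟩ = projOf K₀ hc (B x)

/-- A (partially defined) operator is symmetric if `⟪Bx, y⟫ = ⟪x, By⟫` on its domain. -/
def IsSymmetricPMap {K : Type*} [NormedAddCommGroup K] [InnerProductSpace ℂ K]
    (B : K →ₗ.[ℂ] K) : Prop :=
  ∀ x y : B.domain, (inner ℂ (B x) ((y : K)) : ℂ) = inner ℂ ((x : K)) (B y)

/-- **A self-adjoint operator admits no proper generalized symmetric extension.**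
If `A` is self-adjoint on `H`, `J : H → K` a linear isometry, and `B` a densely defined
symmetric operator on `K` extending `A` through `J` such that no nonzero closed subspace of
`K` orthogonal to the range of `J` reduces `B`, then `J` is surjective and the domain of `B`
is the `J`-image of the domain of `A`. -/
theorem selfAdjoint_no_proper_generalized_symmetric_extension
    {H K : Type*} [NormedAddCommGroup H] [InnerProductSpace ℂ H] [CompleteSpace H]
    [NormedAddCommGroup K] [InnerProductSpace ℂ K] [CompleteSpace K]
    (A : H →ₗ.[ℂ] H) (hA : A.adjoint = A)
    (J : H →ₗᵢ[ℂ] K) (B : K →ₗ.[ℂ] K)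
    (hBsymm : IsSymmetricPMap B) (hBdense : Dense (B.domain : Set K))
    (hmem : ∀ x : A.domain, J (x : H) ∈ B.domain)
    (hext : ∀ (x : A.domain) (h : J (x : H) ∈ B.domain), B ⟨J (x : H), h⟩ = J (A x))
    (hred : ∀ (K₀ : Submodule ℂ K) (hc : IsClosed (K₀ : Set K)),
      K₀ ≤ (LinearMap.range J.toLinearMap)ᗮ → ReducesPMap B K₀ hc → K₀ = ⊥) :
    Function.Surjective J ∧ B.domain = A.domain.map J.toLinearMap := by
  classical
  -- `A` is densely defined (forced by self-adjointness and the junk-value convention).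
  have hAdense : Dense (A.domain : Set H) := by
    by_contra hd
    have hzero : ∀ x : A.domain, A x = 0 := by
      intro x
      have hx' : (x : H) ∈ A.adjoint.domain := by rw [hA]; exact x.2
      have he := (LinearPMap.ext_iff.mp hA).2 (x := (x : H)) (hf := hx') (hg := x.2)
      rw [LinearPMap.adjoint_apply_of_not_dense hd ⟨(x : H), hx'⟩] at he
      exact he.symm
    have htop : ∀ y : H, y ∈ A.domain := by
      intro y
      have hy : y ∈ A.adjoint.domain :=
        LinearPMap.mem_adjoint_domain_of_exists y ⟨0, fun x => by simp [hzero x]⟩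
      rwa [hA] at hy
    have : (A.domain : Set H) = Set.univ := Set.eq_univ_of_forall htop
    rw [this] at hd
    exact hd dense_univ
  set M : Submodule ℂ K := LinearMap.range J.toLinearMap with hM
  have hMclosed : IsClosed (M : Set K) := by
    have hset : (M : Set K) = Set.range J := by
      ext z; simp [hM, LinearMap.mem_range]
    rw [hset]
    exact J.isometry.isClosedEmbedding.isClosed_range
  haveI : CompleteSpace M := hMclosed.completeSpace_coe
  -- the key claim
  have key : ∀ y : B.domain, ∃ u : A.domain,
      J (u : H) = (M.orthogonalProjection (y : K) : K) ∧
      J (A u) = (M.orthogonalProjection ((B y : K)) : K) := by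
    intro y
    obtain ⟨u, hu⟩ := LinearMap.mem_range.mp (M.orthogonalProjection (y : K)).2
    obtain ⟨w, hw⟩ := LinearMap.mem_range.mp (M.orthogonalProjection ((B y : K))).2
    have hu' : J u = (M.orthogonalProjection (y : K) : K) := hu
    have hw' : J w = (M.orthogonalProjection ((B y : K)) : K) := hw
    have main : ∀ x : A.domain, (inner ℂ ((A x : H)) u : ℂ) = inner ℂ ((x : H)) w := by
      intro x
      have h1 : (inner ℂ (J (A x)) ((y : K)) : ℂ) = inner ℂ (J (x : H)) ((B y : K)) := by
        have h2 := hBsymm ⟨J (x : H), hmem x⟩ y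
        rwa [hext x (hmem x)] at h2
      have hJAx : J (A x) ∈ M := ⟨A x, rfl⟩
      have hJx : J (x : H) ∈ M := ⟨(x : H), rfl⟩
      have hL : (inner ℂ (J (A x)) ((y : K)) : ℂ) = inner ℂ ((A x : H)) u := by
        have hsub := Submodule.sub_starProjection_mem_orthogonal (K := M) (y : K)
        have h0 : (inner ℂ (J (A x)) ((y : K) - M.orthogonalProjection (y : K)) : ℂ) = 0 :=
          (Submodule.mem_orthogonal M _).mp hsub _ hJAx
        have hdec : (y : K) = (M.orthogonalProjection (y : K) : K)
            + ((y : K) - M.orthogonalProjection (y : K)) := by abel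
        rw [hdec, inner_add_right, h0, add_zero, ← hu', LinearIsometry.inner_map_map]
      have hR : (inner ℂ (J (x : H)) ((B y : K)) : ℂ) = inner ℂ ((x : H)) w := by
        have hsub := Submodule.sub_starProjection_mem_orthogonal (K := M) ((B y : K))
        have h0 : (inner ℂ (J (x : H)) ((B y : K) - M.orthogonalProjection ((B y : K))) : ℂ) = 0 :=
          (Submodule.mem_orthogonal M _).mp hsub _ hJx
        have hdec : (B y : K) = (M.orthogonalProjection ((B y : K)) : K)
            + ((B y : K) - M.orthogonalProjection ((B y : K))) := by abel
        rw [hdec, inner_add_right, h0, add_zero, ← hw', LinearIsometry.inner_map_map]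
      rw [← hL, h1, hR]
    have hw0 : ∀ x : A.domain, (inner ℂ w ((x : H)) : ℂ) = inner ℂ u ((A x : H)) := by
      intro x
      have := congrArg (starRingEnd ℂ) (main x)
      simpa using this.symm
    have huadj : u ∈ A.adjoint.domain :=
      LinearPMap.mem_adjoint_domain_of_exists u ⟨w, hw0⟩
    have huA : u ∈ A.domain := by rwa [hA] at huadj
    have hadj : A.adjoint ⟨u, huadj⟩ = w :=
      LinearPMap.adjoint_apply_eq hAdense ⟨u, huadj⟩ hw0
    have hAu : A ⟨u, huA⟩ = w := by
      have he := (LinearPMap.ext_iff.mp hA).2 (x := u) (hf := huadj) (hg := huA)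
      rw [hadj] at he
      exact he.symm
    exact ⟨⟨u, huA⟩, hu', by rw [hAu]; exact hw'⟩
  -- the orthogonal complement of the range reduces `B`
  have hK₀closed : IsClosed ((Mᗮ : Submodule ℂ K) : Set K) := Submodule.isClosed_orthogonal M
  have hproj : ∀ x : K, projOf Mᗮ hK₀closed x = x - M.orthogonalProjection x := by
    intro x
    show (Mᗮ.orthogonalProjection x : K) = _
    exact Submodule.starProjection_orthogonal_val (K := M) x
  have hredM : ReducesPMap B Mᗮ hK₀closed := by
    constructor
    · intro y
      obtain ⟨u, hu1, _⟩ := key y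
      rw [hproj, ← hu1]
      exact B.domain.sub_mem y.2 (hmem u)
    · intro y h
      obtain ⟨u, hu1, hu2⟩ := key y
      have hmemu := hmem u
      have hsub : (⟨projOf Mᗮ hK₀closed (y : K), h⟩ : B.domain)
          = y - ⟨J (u : H), hmemu⟩ := by
        apply Subtype.ext
        show projOf Mᗮ hK₀closed (y : K) = (y : K) - J (u : H)
        rw [hproj, hu1]
      rw [hsub, LinearPMap.map_sub, hext u hmemu, hproj, ← hu2]
  have hbot : Mᗮ = ⊥ := hred Mᗮ hK₀closed le_rfl hredM
  have hMtop : M = ⊤ := Submodule.orthogonal_eq_bot_iff.mp hbot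
  have hproj_id : ∀ z : K, (M.orthogonalProjection z : K) = z := by
    intro z
    have hz := Submodule.sub_starProjection_mem_orthogonal (K := M) z
    rw [hbot, Submodule.mem_bot, sub_eq_zero] at hz
    exact hz.symm
  constructor
  · intro z
    have hz : z ∈ M := hMtop ▸ Submodule.mem_top
    obtain ⟨x, hx⟩ := hz
    exact ⟨x, hx⟩
  · apply le_antisymm
    · intro z hz
      obtain ⟨u, hu1, _⟩ := key ⟨z, hz⟩
      refine Submodule.mem_map.mpr ⟨u, u.2, ?_⟩
      show J (u : H) = z
      rw [hu1]
      exact hproj_id z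
    · rintro z ⟨x, hx, rfl⟩
      exact hmem ⟨x, hx⟩
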